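/- Let F be an asymmetric norm on ℝ² that is C¹ on ℝ² ∖ {0}. Then φ_F is right-Lipschitz with constant 1: for all θ ∈ ℝ and all h ≥ 0, φ_F(θ + h) ≥ φ_F(θ) − h; equivalently, the function θ ↦ θ + φ_F(θ) is non-decreasing on ℝ. -/

import Mathlib

open scoped RealInnerProductSpace
open MeasureTheory Real

noncomputable section

abbrev E2 : Type := EuclideanSpace ℝ (Fin 2)

def mk2 (a b : ℝ) : E2 := WithLp.toLp 2 ![a, b]

def IsAsymNorm (F : E2 → ℝ) : Prop :=
  ConvexOn ℝ Set.univ F ∧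
  (∀ (c : ℝ), 0 ≤ c → ∀ u : E2, F (c • u) = c * F u) ∧
  (∀ u : E2, 0 ≤ F u) ∧
  (∀ u : E2, u ≠ 0 → 0 < F u)

def IsAcute (F : E2 → ℝ) (u v : E2) : Prop :=
  ∀ δ : ℝ, 0 ≤ δ → F u ≤ F (u + δ • v) ∧ F v ≤ F (v + δ • u)

noncomputable def kappa (F : E2 → ℝ) : ℝ :=
  sSup {r : ℝ | ∃ u v : E2, ‖u‖ = 1 ∧ ‖v‖ = 1 ∧ r = F u / F v}

def det2 (u v : E2) : ℝ := u 0 * v 1 - u 1 * v 0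

def IsIntVec (u : E2) : Prop := (∃ n : ℤ, u 0 = (n : ℝ)) ∧ (∃ n : ℤ, u 1 = (n : ℝ))

def eTheta (θ : ℝ) : E2 := mk2 (Real.cos θ) (Real.sin θ)

noncomputable def phiF (F : E2 → ℝ) (θ : ℝ) : ℝ :=
  Real.arctan (det2 (eTheta θ) (gradient F (eTheta θ)) / F (eTheta θ))

def rot2 (θ : ℝ) (w : E2) : E2 :=
  mk2 (Real.cos θ * w 0 - Real.sin θ * w 1) (Real.sin θ * w 0 + Real.cos θ * w 1)

def perp (z : E2) : E2 := mk2 (-(z 1)) (z 0)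

/-! ### Auxiliary lemmas -/

lemma inner2 (x y : E2) : ⟪x, y⟫ = x 0 * y 0 + x 1 * y 1 := by
  simp [PiLp.inner_apply, Fin.sum_univ_two]
  ring

lemma eTheta_apply0 (θ : ℝ) : (eTheta θ) 0 = Real.cos θ := by simp [eTheta, mk2]

lemma eTheta_apply1 (θ : ℝ) : (eTheta θ) 1 = Real.sin θ := by simp [eTheta, mk2]

lemma eTheta_ne_zero (θ : ℝ) : eTheta θ ≠ 0 := by
  intro h
  have h0 : Real.cos θ = 0 := by
    have := congrArg (fun w : E2 => w 0) h
    simpa [eTheta, mk2] using this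
  have h1 : Real.sin θ = 0 := by
    have := congrArg (fun w : E2 => w 1) h
    simpa [eTheta, mk2] using this
  nlinarith [Real.sin_sq_add_cos_sq θ]

lemma diffAt (F : E2 → ℝ) (hC1 : ContDiffOn ℝ 1 F {(0 : E2)}ᶜ) {u : E2} (hu : u ≠ 0) :
    DifferentiableAt ℝ F u :=
  (hC1.contDiffAt (isOpen_compl_singleton.mem_nhds hu)).differentiableAt one_ne_zero

lemma hasFDerivAt_toDual (F : E2 → ℝ) (hC1 : ContDiffOn ℝ 1 F {(0 : E2)}ᶜ) {u : E2}
    (hu : u ≠ 0) :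
    HasFDerivAt F ((InnerProductSpace.toDual ℝ E2) (gradient F u)) u :=
  (diffAt F hC1 hu).hasGradientAt.hasFDerivAt

/-- Euler's identity for 1-homogeneous functions. -/
lemma euler (F : E2 → ℝ) (hF : IsAsymNorm F) (hC1 : ContDiffOn ℝ 1 F {(0 : E2)}ᶜ)
    {u : E2} (hu : u ≠ 0) : ⟪gradient F u, u⟫ = F u := by
  have hfd := hasFDerivAt_toDual F hC1 hu
  have hsm : HasDerivAt (fun t : ℝ => t • u) u 1 := by
    simpa using (hasDerivAt_id (1 : ℝ)).smul_const u
  have hfd' : HasFDerivAt F ((InnerProductSpace.toDual ℝ E2) (gradient F u)) ((1 : ℝ) • u) := by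
    rwa [one_smul]
  have h1 : HasDerivAt (fun t : ℝ => F (t • u)) (⟪gradient F u, u⟫) 1 := by
    have := hfd'.comp_hasDerivAt 1 hsm
    simp only [InnerProductSpace.toDual_apply_apply] at this
    exact this
  have hmul : HasDerivAt (fun t : ℝ => t * F u) (F u) 1 := by
    simpa using (hasDerivAt_id (1 : ℝ)).mul_const (F u)
  have hev : (fun t : ℝ => F (t • u)) =ᶠ[nhds (1 : ℝ)] (fun t : ℝ => t * F u) := by
    filter_upwards [Ioi_mem_nhds (show (0 : ℝ) < 1 by norm_num)] with t ht
    exact hF.2.1 t (le_of_lt ht) u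
  have h2 : HasDerivAt (fun t : ℝ => F (t • u)) (F u) 1 := hmul.congr_of_eventuallyEq hev
  exact h1.unique h2

/-- Subgradient inequality: `⟪∇F(u), v⟫ ≤ F v`. -/
lemma subgrad (F : E2 → ℝ) (hF : IsAsymNorm F) (hC1 : ContDiffOn ℝ 1 F {(0 : E2)}ᶜ)
    {u : E2} (hu : u ≠ 0) (v : E2) : ⟪gradient F u, v⟫ ≤ F v := by
  have hfd := hasFDerivAt_toDual F hC1 hu
  set w : E2 := v - u with hw
  have hsm : HasDerivAt (fun t : ℝ => u + t • w) w 0 := by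
    simpa using ((hasDerivAt_id (0 : ℝ)).smul_const w).const_add u
  have hfd0 : HasFDerivAt F ((InnerProductSpace.toDual ℝ E2) (gradient F u)) (u + (0 : ℝ) • w) := by
    simpa using hfd
  have hder : HasDerivAt (fun t : ℝ => F (u + t • w)) (⟪gradient F u, w⟫) 0 := by
    have := hfd0.comp_hasDerivAt 0 hsm
    simp only [InnerProductSpace.toDual_apply_apply] at this
    exact this
  have key : ⟪gradient F u, w⟫ ≤ F v - F u := by
    have htend : Filter.Tendsto (slope (fun t : ℝ => F (u + t • w)) 0) (nhdsWithin 0 (Set.Ioi 0))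
        (nhds (⟪gradient F u, w⟫)) :=
      (hasDerivAt_iff_tendsto_slope.1 hder).mono_left
        (nhdsWithin_mono 0 (fun x hx => ne_of_gt hx))
    refine le_of_tendsto htend ?_
    filter_upwards [Ioc_mem_nhdsGT_of_mem (Set.mem_Ico.2 ⟨le_refl (0 : ℝ), zero_lt_one⟩)] with t ht
    have hcv := hF.1.2 (Set.mem_univ u) (Set.mem_univ v)
      (show (0:ℝ) ≤ 1 - t by linarith [ht.2]) (le_of_lt ht.1) (by ring)
    have heq : (1 - t) • u + t • v = u + t • w := by
      rw [hw]; rw [sub_smul, one_smul, smul_sub]; abel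
    rw [heq] at hcv
    rw [slope_def_field]
    have h0 : u + (0 : ℝ) • w = u := by simp
    rw [sub_zero, h0, div_le_iff₀ ht.1]
    simp only [smul_eq_mul] at hcv
    nlinarith [hcv]
  have hlin : ⟪gradient F u, w⟫ = ⟪gradient F u, v⟫ - ⟪gradient F u, u⟫ := by
    rw [hw, inner_sub_right]
  rw [hlin, euler F hF hC1 hu] at key
  linarith

/-- The key trigonometric lemma. -/
lemma keytrig (a b D1 D2 h : ℝ) (ha : 0 < a) (hb : 0 < b) (hh0 : 0 < h)
    (h1 : Real.cos h * a + Real.sin h * D1 ≤ b)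
    (h2 : Real.cos h * b - Real.sin h * D2 ≤ a) :
    Real.arctan (D1 / a) - h ≤ Real.arctan (D2 / b) := by
  by_contra hcon
  push_neg at hcon
  set A := Real.arctan (D1 / a) with hAdef
  set B := Real.arctan (D2 / b) with hBdef
  have hA1 : -(π / 2) < A := Real.neg_pi_div_two_lt_arctan _
  have hA2 : A < π / 2 := Real.arctan_lt_pi_div_two _
  have hB1 : -(π / 2) < B := Real.neg_pi_div_two_lt_arctan _
  have hB2 : B < π / 2 := Real.arctan_lt_pi_div_two _
  have hcosA : 0 < Real.cos A := Real.cos_pos_of_mem_Ioo ⟨hA1, hA2⟩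
  have hcosB : 0 < Real.cos B := Real.cos_pos_of_mem_Ioo ⟨hB1, hB2⟩
  have hBA : B + h < A := by linarith
  have hsA : D1 * Real.cos A = a * Real.sin A := by
    have h := Real.tan_arctan (D1 / a)
    rw [← hAdef, Real.tan_eq_sin_div_cos, div_eq_div_iff hcosA.ne' ha.ne'] at h
    linarith
  have hsB : D2 * Real.cos B = b * Real.sin B := by
    have h := Real.tan_arctan (D2 / b)
    rw [← hBdef, Real.tan_eq_sin_div_cos, div_eq_div_iff hcosB.ne' hb.ne'] at h
    linarith
  have h1' : a * Real.cos (h - A) ≤ b * Real.cos A := by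
    have h' := mul_le_mul_of_nonneg_right h1 hcosA.le
    rw [Real.cos_sub]
    have key : a * (Real.cos h * Real.cos A + Real.sin h * Real.sin A)
        = (Real.cos h * a + Real.sin h * D1) * Real.cos A := by
      linear_combination (-Real.sin h) * hsA
    linarith [h', key.le, key.ge]
  have h2' : b * Real.cos (h + B) ≤ a * Real.cos B := by
    have h' := mul_le_mul_of_nonneg_right h2 hcosB.le
    rw [Real.cos_add]
    have key : b * (Real.cos h * Real.cos B - Real.sin h * Real.sin B)
        = (Real.cos h * b - Real.sin h * D2) * Real.cos B := by
      linear_combination Real.sin h * hsB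
    linarith [h', key.le, key.ge]
  have hc1 : 0 < Real.cos (h + B) :=
    Real.cos_pos_of_mem_Ioo ⟨by linarith, by linarith⟩
  have hcomb : Real.cos (h - A) * Real.cos (h + B) ≤ Real.cos A * Real.cos B := by
    have e1 := mul_le_mul_of_nonneg_right h1' hc1.le
    have e2 := mul_le_mul_of_nonneg_right h2' hcosA.le
    have e3 : a * (Real.cos (h - A) * Real.cos (h + B)) ≤ a * (Real.cos A * Real.cos B) := by
      nlinarith [e1, e2]
    exact le_of_mul_le_mul_left e3 ha
  have hDpi : A - B < π := by linarith
  have hDabs : |A - B - 2 * h| < A - B := abs_lt.2 ⟨by linarith, by linarith⟩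
  have hcoslt : Real.cos (A - B) < Real.cos (A - B - 2 * h) := by
    rw [← Real.cos_abs (A - B - 2 * h)]
    exact Real.cos_lt_cos_of_nonneg_of_le_pi (abs_nonneg _) hDpi.le hDabs
  have i1 : Real.cos (A - B - 2 * h) + Real.cos (A + B)
      = 2 * Real.cos (h - A) * Real.cos (h + B) := by
    rw [Real.cos_add_cos, show (A - B - 2 * h + (A + B)) / 2 = -(h - A) by ring,
      show (A - B - 2 * h - (A + B)) / 2 = -(h + B) by ring, Real.cos_neg, Real.cos_neg]
  have i2 : Real.cos (A - B) + Real.cos (A + B) = 2 * Real.cos A * Real.cos B := by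
    rw [Real.cos_add_cos, show (A - B + (A + B)) / 2 = A by ring,
      show (A - B - (A + B)) / 2 = -B by ring, Real.cos_neg]
  linarith

/-- One step of the monotonicity. -/
lemma stepLemma (F : E2 → ℝ) (hF : IsAsymNorm F) (hC1 : ContDiffOn ℝ 1 F {(0 : E2)}ᶜ)
    (θ h : ℝ) (h0 : 0 ≤ h) : phiF F θ - h ≤ phiF F (θ + h) := by
  rcases eq_or_lt_of_le h0 with rfl | hpos
  · rw [add_zero]; linarith
  set u : E2 := eTheta θ with hu'
  set v : E2 := eTheta (θ + h) with hv'
  have hu : u ≠ 0 := eTheta_ne_zero θ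
  have hv : v ≠ 0 := eTheta_ne_zero (θ + h)
  have ha : 0 < F u := hF.2.2.2 u hu
  have hb : 0 < F v := hF.2.2.2 v hv
  set g1 : E2 := gradient F u with hg1
  set g2 : E2 := gradient F v with hg2
  have fact1 : ⟪g1, u⟫ = F u := euler F hF hC1 hu
  have fact2 : ⟪g1, v⟫ ≤ F v := subgrad F hF hC1 hu v
  have fact3 : ⟪g2, v⟫ = F v := euler F hF hC1 hv
  have fact4 : ⟪g2, u⟫ ≤ F u := subgrad F hF hC1 hv u
  have e1 : ⟪g1, v⟫ = Real.cos h * ⟪g1, u⟫ + Real.sin h * det2 u g1 := by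
    rw [inner2, inner2]
    simp only [hu', hv', det2, eTheta_apply0, eTheta_apply1, Real.cos_add, Real.sin_add]
    ring
  have e2 : ⟪g2, u⟫ = Real.cos h * ⟪g2, v⟫ - Real.sin h * det2 v g2 := by
    have hc : Real.cos θ = Real.cos (θ + h) * Real.cos h + Real.sin (θ + h) * Real.sin h := by
      have := Real.cos_sub (θ + h) h
      rw [show θ + h - h = θ by ring] at this
      linarith
    have hs : Real.sin θ = Real.sin (θ + h) * Real.cos h - Real.cos (θ + h) * Real.sin h := by
      have := Real.sin_sub (θ + h) h
      rw [show θ + h - h = θ by ring] at this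
      linarith
    rw [inner2, inner2]
    simp only [hu', hv', det2, eTheta_apply0, eTheta_apply1]
    rw [hc, hs]
    ring
  have H1 : Real.cos h * F u + Real.sin h * det2 u g1 ≤ F v := by
    rw [← fact1]; linarith [fact2, e1]
  have H2 : Real.cos h * F v - Real.sin h * det2 v g2 ≤ F u := by
    rw [← fact3]; linarith [fact4, e2]
  have := keytrig (F u) (F v) (det2 u g1) (det2 v g2) h ha hb hpos H1 H2
  simpa [phiF, ← hu', ← hv', ← hg1, ← hg2] using this

/-- `φ_F` is right-Lipschitz with constant 1:
`φ_F(θ+h) ≥ φ_F(θ) − h` for `h ≥ 0`; equivalently `θ ↦ θ + φ_F(θ)` is non-decreasing. -/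
theorem stmt12 (F : E2 → ℝ) (hF : IsAsymNorm F) (hC1 : ContDiffOn ℝ 1 F {(0 : E2)}ᶜ) :
    (∀ θ h : ℝ, 0 ≤ h → phiF F θ - h ≤ phiF F (θ + h)) ∧
    Monotone (fun θ : ℝ => θ + phiF F θ) := by
  refine ⟨fun θ h h0 => stepLemma F hF hC1 θ h h0, ?_⟩
  intro x y hxy
  have h := stepLemma F hF hC1 x (y - x) (by linarith)
  rw [show x + (y - x) = y by ring] at h
  simp only
  linarith
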